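/- Let τ be a nonempty index set, φ : τ → τ a self-map, and w : τ → ℂ a weight vector such that σ_{φ,w} maps ℓ²(τ) into ℓ²(τ). If the bounded operator σ_{φ,w}|_{ℓ²(τ)} is self-adjoint, then for every θ ∈ τ: w_θ = 0 whenever φ(φ(θ)) ≠ θ, and w_θ = conj(w_{φ(θ)}) whenever φ(φ(θ)) = θ. -/

import Mathlib

/-- If the bounded weighted generalized shift operator `σ_{φ,w}|_{ℓ²(τ)}`
is self-adjoint, then `w_θ = 0` whenever `φ²(θ) ≠ θ`, and `w_θ = conj(w_{φ(θ)})` whenever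
`φ²(θ) = θ`. -/
theorem weighted_shift_selfAdjoint_necessary {τ : Type*} [Nonempty τ] (φ : τ → τ) (w : τ → ℂ)
    (T : lp (fun _ : τ => ℂ) 2 →L[ℂ] lp (fun _ : τ => ℂ) 2)
    (hT : ∀ (x : lp (fun _ : τ => ℂ) 2) (α : τ), T x α = w α * x (φ α))
    (hsa : ContinuousLinearMap.adjoint T = T) :
    ∀ θ : τ, (φ (φ θ) ≠ θ → w θ = 0) ∧ (φ (φ θ) = θ → w θ = (starRingEnd ℂ) (w (φ θ))) := by
  classical
  intro θ
  set e : lp (fun _ : τ => ℂ) 2 := lp.single 2 (φ θ) (1 : ℂ) with he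
  set e' : lp (fun _ : τ => ℂ) 2 := lp.single 2 θ (1 : ℂ) with he'
  have key : (inner ℂ (T e) e' : ℂ) = inner ℂ e (T e') := by
    conv_lhs => rw [← hsa]
    exact ContinuousLinearMap.adjoint_inner_left T e' e
  rw [lp.inner_single_right, lp.inner_single_left] at key
  have hL : (T e) θ = w θ := by
    rw [hT, he, lp.single_apply_self, mul_one]
  have hR : (T e') (φ θ) = w (φ θ) * (if φ (φ θ) = θ then 1 else 0) := by
    rw [hT, he']
    congr 1
    rw [lp.single_apply]
    split_ifs <;> simp_all
  rw [hL, hR] at key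
  simp only [RCLike.inner_apply, map_one, mul_one, one_mul] at key
  constructor
  · intro h
    rw [if_neg h, mul_zero] at key
    simpa using congrArg (starRingEnd ℂ) key
  · intro h
    rw [if_pos h, mul_one] at key
    simpa using congrArg (starRingEnd ℂ) key
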